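/- With $A_m$ the $m\times m$ matrix having entries $-1$ above the diagonal, $0$ on it, and $1$ below it, the matrix $W=(A_m+I_m)(A_m-I_m)^{-1}$ equals $-e_{m1}+\sum_{i=2}^m e_{i-1,i}$, i.e., $W$ is the signed cyclic shift matrix with $W_{i,i+1}=1$ for $i=1,\dots,m-1$, $W_{m,1}=-1$, and all other entries $0$. Consequently $W^m=-I_m$. -/
import Mathlib


/-- `W = (A_m + 1)(A_m − 1)⁻¹` is the signed cyclic shift matrix, and `W^m = −1`. -/
theorem stmt13 (m : ℕ) (hm : 1 ≤ m) (A W : Matrix (Fin m) (Fin m) ℚ)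
    (hA : ∀ i j : Fin m, A i j = if i < j then -1 else if j < i then 1 else 0)
    (hW : ∀ i j : Fin m, W i j = if (i : ℕ) + 1 = (j : ℕ) then 1
      else if (i : ℕ) = m - 1 ∧ (j : ℕ) = 0 then -1 else 0) :
    (A + 1) * (A - 1)⁻¹ = W ∧ W ^ m = -1 := by
  have hm0 : 0 < m := hm
  -- Key computation: W * (A - 1) = A + 1
  have L : W * (A - 1) = A + 1 := by
    ext i j
    rw [Matrix.mul_apply]
    have hii := i.isLt
    have hjj := j.isLt
    by_cases hi : (i : ℕ) + 1 < m
    · rw [Fintype.sum_eq_single (⟨(i : ℕ) + 1, hi⟩ : Fin m)]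
      · simp only [Matrix.sub_apply, Matrix.add_apply, Matrix.one_apply]
        rw [hW, hA, hA]
        simp only [Fin.lt_def, Fin.ext_iff, Fin.val_mk]
        split_ifs <;> first | (exact ‹False›.elim) | omega | (exfalso; omega) | norm_num
      · intro l hl
        rw [hW]
        have h1 : ¬((i : ℕ) + 1 = (l : ℕ)) := fun h => hl (Fin.ext h.symm)
        have h2 : ¬((i : ℕ) = m - 1) := by omega
        simp [h1, h2]
    · rw [Fintype.sum_eq_single (⟨0, hm0⟩ : Fin m)]
      · simp only [Matrix.sub_apply, Matrix.add_apply, Matrix.one_apply]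
        rw [hW, hA, hA]
        simp only [Fin.lt_def, Fin.ext_iff, Fin.val_mk, and_true, true_and]
        split_ifs <;> first | (exact ‹False›.elim) | omega | (exfalso; omega) | norm_num
      · intro l hl
        rw [hW]
        have hl0 : ¬((l : ℕ) = 0) := fun h => hl (Fin.ext h)
        have h1 : ¬((i : ℕ) + 1 = (l : ℕ)) := by have := l.isLt; omega
        simp [h1, hl0]
  -- (A - 1) is invertible
  have hinv : ((1/2 : ℚ) • (W - 1)) * (A - 1) = 1 := by
    rw [Matrix.smul_mul, sub_mul, L, one_mul]
    have h2 : (A + 1) - (A - 1) = (2 : ℚ) • (1 : Matrix (Fin m) (Fin m) ℚ) := by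
      ext i j
      by_cases h : i = j <;> simp [h, Matrix.one_apply] <;> norm_num
    rw [h2, smul_smul]
    norm_num
  have hdet : IsUnit (A - 1).det := Matrix.isUnit_det_of_left_inverse hinv
  refine ⟨?_, ?_⟩
  · calc (A + 1) * (A - 1)⁻¹ = (W * (A - 1)) * (A - 1)⁻¹ := by rw [L]
      _ = W * ((A - 1) * (A - 1)⁻¹) := by rw [Matrix.mul_assoc]
      _ = W := by rw [Matrix.mul_nonsing_inv _ hdet, Matrix.mul_one]
  · -- powers of W
    have key : ∀ k, k ≤ m → ∀ i j : Fin m, (W ^ k) i j =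
        if (i : ℕ) + k = (j : ℕ) then 1
        else if (i : ℕ) + k = (j : ℕ) + m then -1 else 0 := by
      intro k
      induction k with
      | zero =>
        intro _ i j
        have hj := j.isLt
        rw [pow_zero]
        simp only [Matrix.one_apply, Fin.ext_iff, Nat.add_zero]
        split_ifs <;> first | (exact ‹False›.elim) | omega | (exfalso; omega) | norm_num
      | succ k ih =>
        intro hk i j
        have hk' : k ≤ m := Nat.le_of_succ_le hk
        rw [pow_succ, Matrix.mul_apply]
        have hii := i.isLt
        have hjj := j.isLt
        by_cases hc : (i : ℕ) + k < m
        · rw [Fintype.sum_eq_single (⟨(i : ℕ) + k, hc⟩ : Fin m)]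
          · rw [ih hk', hW]
            simp only [Fin.ext_iff, Fin.val_mk]
            split_ifs <;> first | (exact ‹False›.elim) | omega | (exfalso; omega) | norm_num
          · intro l hl
            rw [ih hk']
            have h1 : ¬((i : ℕ) + k = (l : ℕ)) := fun h => hl (Fin.ext h.symm)
            have h2 : ¬((i : ℕ) + k = (l : ℕ) + m) := by have := l.isLt; omega
            simp [h1, h2]
        · push_neg at hc
          have hlt : (i : ℕ) + k - m < m := by omega
          rw [Fintype.sum_eq_single (⟨(i : ℕ) + k - m, hlt⟩ : Fin m)]
          · rw [ih hk', hW]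
            simp only [Fin.ext_iff, Fin.val_mk]
            split_ifs <;> first | (exact ‹False›.elim) | omega | (exfalso; omega) | norm_num
          · intro l hl
            rw [ih hk']
            have hll := l.isLt
            have h1 : ¬((i : ℕ) + k = (l : ℕ)) := by omega
            have h2 : ¬((i : ℕ) + k = (l : ℕ) + m) := by
              intro h
              have hv : (l : ℕ) = (i : ℕ) + k - m := by omega
              exact hl (Fin.ext hv)
            simp [h1, h2]
    ext i j
    rw [key m le_rfl]
    have hj := j.isLt
    have hi := i.isLt
    simp only [Matrix.neg_apply, Matrix.one_apply, Fin.ext_iff]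
    split_ifs <;> first | (exact ‹False›.elim) | omega | (exfalso; omega) | norm_num
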